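/- Given a splitting s : L → K of the map u₀∘(I⊗f₀) (i.e. a B-linear map s : L → K whose restriction to I⊗_{B₀}E₀ equals u₀∘(I⊗f₀)), the pushout F := K ⊕_L E of E along s yields a short exact sequence 0 → K → F → F₀ → 0 and a morphism of extensions from (0 → I⊗E₀ → E → E₀ → 0) to it with kernel map u₀∘(I⊗f₀) and cokernel map f₀; that is, F solves the lifting problem. -/

import Mathlib

/-!
STATEMENT 4: given a `B`-linear map `s : L → K` whose restriction along
`ι : I⊗E₀ → L` equals `g = u₀ ∘ (I ⊗ f₀)`, the pushout `F := K ⊕_L E`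
(realized as `(K × E) ⧸ {(s x, -x) : x ∈ L}`) yields a short exact sequence
`0 → K → F → F₀ → 0` together with a morphism of extensions from
`0 → I⊗E₀ → E → E₀ → 0` with kernel map `g` and cokernel map `f₀`;
i.e. `F` solves the lifting problem.
-/

open TensorProduct

theorem stmt4 {B : Type*} [CommRing B] (I : Ideal B) (hI : I ^ 2 = ⊥)
    {E E₀ F₀ K : Type*} [AddCommGroup E] [AddCommGroup E₀] [AddCommGroup F₀]
    [AddCommGroup K] [Module B E] [Module B E₀] [Module B F₀] [Module B K]
    (hE₀ : ∀ i ∈ I, ∀ x : E₀, i • x = 0) (hF₀ : ∀ i ∈ I, ∀ x : F₀, i • x = 0)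
    (hK : ∀ i ∈ I, ∀ x : K, i • x = 0)
    (p : E →ₗ[B] E₀) (hp : Function.Surjective p)
    (μ : (↥I ⊗[B] E₀) →ₗ[B] E)
    (hμ : ∀ (i : ↥I) (e : E), μ (i ⊗ₜ[B] p e) = (i : B) • e)
    (hμinj : Function.Injective μ)
    (hex : Function.Exact μ p)
    (f₀ : E₀ →ₗ[B] F₀) (hf₀ : Function.Surjective f₀)
    (u₀ : (↥I ⊗[B] F₀) →ₗ[B] K)
    (ι : (↥I ⊗[B] E₀) →ₗ[B] ↥(LinearMap.ker (f₀ ∘ₗ p)))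
    (hι : ∀ t, (ι t : E) = μ t)
    -- the splitting `s : L → K` of `u₀ ∘ (I⊗f₀)`
    (s : ↥(LinearMap.ker (f₀ ∘ₗ p)) →ₗ[B] K)
    (hs : ∀ t, s (ι t) = u₀ (LinearMap.lTensor ↥I f₀ t)) :
    -- the pushout `F := K ⊕_L E`
    letI F := (K × E) ⧸
      LinearMap.range (s.prod (-(LinearMap.ker (f₀ ∘ₗ p)).subtype))
    ∃ (κ : K →ₗ[B] F) (q : F →ₗ[B] F₀) (f : E →ₗ[B] F),
      (∀ k, κ k = Submodule.Quotient.mk (k, 0)) ∧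
      (∀ e, f e = Submodule.Quotient.mk (0, e)) ∧
      (∀ e, q (Submodule.Quotient.mk (0, e)) = f₀ (p e)) ∧
      Function.Injective κ ∧ Function.Surjective q ∧ Function.Exact κ q ∧
      (∀ t, f (μ t) = κ (u₀ (LinearMap.lTensor ↥I f₀ t))) ∧
      (∀ e, q (f e) = f₀ (p e)) := by
  classical
  have hq0 : ∀ z ∈ LinearMap.range (s.prod (-(LinearMap.ker (f₀ ∘ₗ p)).subtype)),
      ((f₀ ∘ₗ p) ∘ₗ LinearMap.snd B K E) z = 0 := by
    rintro z ⟨x, rfl⟩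
    simp only [LinearMap.coe_comp, Function.comp_apply, LinearMap.snd_apply,
      LinearMap.prod_apply, Function.prod, LinearMap.neg_apply, Submodule.coe_subtype,
      map_neg, neg_eq_zero]
    exact x.2
  refine ⟨(LinearMap.range (s.prod (-(LinearMap.ker (f₀ ∘ₗ p)).subtype))).mkQ
      ∘ₗ LinearMap.inl B K E,
    (LinearMap.range (s.prod (-(LinearMap.ker (f₀ ∘ₗ p)).subtype))).liftQ
      ((f₀ ∘ₗ p) ∘ₗ LinearMap.snd B K E) hq0,
    (LinearMap.range (s.prod (-(LinearMap.ker (f₀ ∘ₗ p)).subtype))).mkQ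
      ∘ₗ LinearMap.inr B K E, fun k => rfl, fun e => rfl, fun e => rfl,
    ?_, ?_, ?_, ?_, fun e => rfl⟩
  · -- injectivity of κ
    intro k₁ k₂ h
    have hmem : ((k₁ : K), (0 : E)) - (k₂, 0)
        ∈ LinearMap.range (s.prod (-(LinearMap.ker (f₀ ∘ₗ p)).subtype)) := by
      have h' : (Submodule.Quotient.mk ((k₁ : K), (0 : E)) :
          (K × E) ⧸ LinearMap.range (s.prod (-(LinearMap.ker (f₀ ∘ₗ p)).subtype)))
          = Submodule.Quotient.mk (k₂, 0) := h
      exact (Submodule.Quotient.eq _).mp h' 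
    obtain ⟨x, hx⟩ := hmem
    have hx2 : -(x : E) = (0 : E) - 0 := congrArg Prod.snd hx
    have hx0 : x = 0 := Subtype.ext (by simpa using hx2)
    have hx1 : s x = k₁ - k₂ := congrArg Prod.fst hx
    rw [hx0, map_zero] at hx1
    exact sub_eq_zero.mp hx1.symm
  · -- surjectivity of q
    intro y
    obtain ⟨e₀, rfl⟩ := hf₀ y
    obtain ⟨e, rfl⟩ := hp e₀
    exact ⟨Submodule.Quotient.mk (0, e), rfl⟩
  · -- exactness
    intro y
    obtain ⟨⟨k, e⟩, rfl⟩ := Submodule.Quotient.mk_surjective _ y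
    constructor
    · intro hy
      have he : e ∈ LinearMap.ker (f₀ ∘ₗ p) := by
        have : f₀ (p e) = 0 := hy
        simpa [LinearMap.mem_ker] using this
      refine ⟨k + s ⟨e, he⟩, ?_⟩
      have hm : ((k + s ⟨e, he⟩, (0 : E)) : K × E) - (k, e)
          ∈ LinearMap.range (s.prod (-(LinearMap.ker (f₀ ∘ₗ p)).subtype)) := by
        refine ⟨⟨e, he⟩, ?_⟩
        simp [Prod.ext_iff]
      show Submodule.Quotient.mk _ = Submodule.Quotient.mk _
      exact (Submodule.Quotient.eq _).mpr hm
    · rintro ⟨k', hk'⟩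
      rw [← hk']
      show f₀ (p 0) = 0
      simp
  · -- compatibility with μ and u₀
    intro t
    show Submodule.Quotient.mk ((0 : K), μ t)
      = Submodule.Quotient.mk (u₀ (LinearMap.lTensor ↥I f₀ t), (0 : E))
    rw [Submodule.Quotient.eq]
    refine ⟨-ι t, ?_⟩
    have h1 : s (-ι t) = 0 - u₀ (LinearMap.lTensor ↥I f₀ t) := by
      rw [map_neg, hs]; abel
    have h2 : -((-(ι t) : LinearMap.ker (f₀ ∘ₗ p)) : E) = μ t - 0 := by
      push_cast
      rw [hι]; abel
    exact Prod.ext (by simpa using h1) (by simpa using h2)
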